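/- Orbits and faces (algebraically closed case): Let k be an algebraically closed field and P a cancellative commutative monoid. Let x, y : P → k be two monoid homomorphisms into the multiplicative monoid of k. Then {p ∈ P : x(p) ≠ 0} = {p ∈ P : y(p) ≠ 0} if and only if there exists a monoid homomorphism g : P → kˣ such that y(p) = g(p) · x(p) for all p ∈ P. -/

import Mathlib

open Localization

section Groth

variable {M : Type*} [CommMonoid M]

noncomputable instance grothGroup : CommGroup (Localization (⊤ : Submonoid M)) :=
  { (inferInstance : CommMonoid (Localization (⊤ : Submonoid M))) with
    inv := fun z => Localization.liftOn z
      (fun a b => Localization.mk (b : M) ⟨a, Submonoid.mem_top a⟩)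
      (by
        intro a c b d h
        rw [Localization.r_iff_exists] at h
        obtain ⟨u, hu⟩ := h
        rw [Localization.mk_eq_mk_iff, Localization.r_iff_exists]
        exact ⟨u, by simpa [mul_comm, mul_left_comm] using hu.symm⟩)
    inv_mul_cancel := fun z => by
      induction z using Localization.ind with
      | _ y =>
        rcases y with ⟨a, b⟩
        show Localization.mk (b : M) ⟨a, Submonoid.mem_top a⟩ * Localization.mk a b = 1
        rw [Localization.mk_mul, ← Localization.mk_one, Localization.mk_eq_mk_iff,
          Localization.r_iff_exists]
        exact ⟨1, by simp [mul_comm]⟩ }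

/-- lift a hom to a group through the Grothendieck group -/
noncomputable def grothLift {T : Type*} [CommGroup T] (φ : M →* T) :
    Localization (⊤ : Submonoid M) →* T where
  toFun z := Localization.liftOn z (fun a b => φ a * (φ (b : M))⁻¹)
    (by
      intro a c b d h
      rw [Localization.r_iff_exists] at h
      obtain ⟨u, hu⟩ := h
      have h2 : φ (u : M) * (φ ((d : M) * a)) = φ (u : M) * (φ ((b : M) * c)) := by
        rw [← map_mul, ← map_mul, hu]
      have h3 : φ ((d : M) * a) = φ ((b : M) * c) := mul_left_cancel h2
      rw [map_mul, map_mul] at h3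
      show φ a * (φ (b : M))⁻¹ = φ c * (φ (d : M))⁻¹
      have h4 : φ a * φ (d : M) = φ c * φ (b : M) := by
        rw [mul_comm (φ a), h3, mul_comm]
      rw [← div_eq_mul_inv, ← div_eq_mul_inv, div_eq_div_iff_mul_eq_mul]
      exact h4)
  map_one' := by
    rw [← Localization.mk_one, Localization.liftOn_mk]
    simp
  map_mul' z w := by
    induction z using Localization.ind with
    | _ y =>
      induction w using Localization.ind with
      | _ y' =>
        rcases y with ⟨a, b⟩; rcases y' with ⟨c, d⟩
        dsimp only
        rw [Localization.mk_mul, Localization.liftOn_mk, Localization.liftOn_mk,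
          Localization.liftOn_mk]
        push_cast
        rw [map_mul, map_mul, mul_inv]
        exact mul_mul_mul_comm _ _ _ _

theorem grothLift_mk {T : Type*} [CommGroup T] (φ : M →* T) (a : M) (b : (⊤ : Submonoid M)) :
    grothLift φ (Localization.mk a b) = φ a * (φ (b : M))⁻¹ := rfl

/-- inclusion into the Grothendieck group -/
noncomputable def grothInc : M →* Localization (⊤ : Submonoid M) where
  toFun m := Localization.mk m 1
  map_one' := Localization.mk_one
  map_mul' a b := by rw [Localization.mk_mul, mul_one]

theorem grothInc_injective [IsCancelMul M] :
    Function.Injective (grothInc : M →* Localization (⊤ : Submonoid M)) := by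
  intro a b h
  have : Localization.mk a (1 : (⊤ : Submonoid M)) = Localization.mk b 1 := h
  rw [Localization.mk_eq_mk_iff, Localization.r_iff_exists] at this
  obtain ⟨u, hu⟩ := this
  simp only [OneMemClass.coe_one, one_mul] at hu
  exact mul_left_cancel hu

end Groth

section Div

variable (k : Type*) [Field k] [IsAlgClosed k]

noncomputable instance unitsRootable : RootableBy kˣ ℕ :=
  rootableByOfPowLeftSurj _ _ (by
    intro n hn u
    obtain ⟨z, hz⟩ := IsAlgClosed.exists_pow_nat_eq (k := k) (u : k) (Nat.pos_of_ne_zero hn)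
    have hz0 : z ≠ 0 := by
      intro h
      rw [h, zero_pow hn] at hz
      exact u.ne_zero hz.symm
    exact ⟨Units.mk0 z hz0, by ext; push_cast; exact hz⟩)

noncomputable instance unitsRootableInt : RootableBy kˣ ℤ :=
  Group.rootableByIntOfRootableByNat _

noncomputable instance unitsDivisible : DivisibleBy (Additive kˣ) ℤ where
  div a n := Additive.ofMul (RootableBy.root a.toMul n)
  div_zero a := congrArg Additive.ofMul (RootableBy.root_zero a.toMul)
  div_cancel a hn := by
    rw [← ofMul_zpow, RootableBy.root_cancel _ hn]
    rfl

end Div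

section Ext

variable {M : Type*} [CommMonoid M] [IsCancelMul M] (S : Submonoid M)

theorem grothLift_inc_injective :
    Function.Injective (grothLift ((grothInc).comp S.subtype) :
      Localization (⊤ : Submonoid S) →* Localization (⊤ : Submonoid M)) := by
  intro z w hzw
  induction z using Localization.ind with
  | _ u =>
  induction w using Localization.ind with
  | _ v =>
  rcases u with ⟨a, b⟩; rcases v with ⟨c, d⟩
  rw [grothLift_mk, grothLift_mk] at hzw
  rw [← div_eq_mul_inv, ← div_eq_mul_inv, div_eq_div_iff_mul_eq_mul] at hzw
  simp only [MonoidHom.comp_apply, Submonoid.coe_subtype, ← map_mul] at hzw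
  have h4 : (a : M) * ((d : S) : M) = (c : M) * ((b : S) : M) := grothInc_injective hzw
  rw [Localization.mk_eq_mk_iff, Localization.r_iff_exists]
  refine ⟨1, Subtype.ext ?_⟩
  push_cast
  rw [one_mul, one_mul, mul_comm ((d:S):M), mul_comm ((b:S):M)]
  exact h4

theorem groth_ext (k : Type*) [Field k] [IsAlgClosed k] (h : S →* kˣ) :
    ∃ g : M →* kˣ, ∀ s : S, g (s : M) = h s := by
  set j : Localization (⊤ : Submonoid S) →* Localization (⊤ : Submonoid M) :=
    grothLift ((grothInc).comp S.subtype) with hj_def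
  have hj : Function.Injective (MonoidHom.toAdditive j) := fun a b hab =>
    grothLift_inc_injective S hab
  obtain ⟨gA, hgA⟩ := Module.Baer.extension_property_addMonoidHom
    (Module.Baer.of_divisible (Additive kˣ))
    (MonoidHom.toAdditive j) hj (MonoidHom.toAdditive (grothLift h))
  refine ⟨(MonoidHom.toAdditive.symm gA).comp grothInc, fun s => ?_⟩
  have key1 : j (Localization.mk s (1 : (⊤ : Submonoid S))) = grothInc (s : M) := by
    rw [hj_def, grothLift_mk]; simp
  have key2 := DFunLike.congr_fun hgA (Additive.ofMul (Localization.mk s (1 : (⊤ : Submonoid S))))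
  have key3 : Additive.toMul (gA (Additive.ofMul (j (Localization.mk s (1 : (⊤ : Submonoid S)))))) =
      grothLift h (Localization.mk s (1 : (⊤ : Submonoid S))) := congrArg Additive.toMul key2
  show Additive.toMul (gA (Additive.ofMul (grothInc (s : M)))) = h s
  rw [← key1, key3, grothLift_mk]
  simp

end Ext


/-- **Orbits and faces (algebraically closed case).** Let `k` be an algebraically closed
field and `P` a cancellative commutative monoid.  Two monoid homomorphisms
`x, y : P → (k, ·)` have the same face `{p : x p ≠ 0} = {p : y p ≠ 0}` iff there is a
monoid homomorphism `g : P → kˣ` with `y p = g p · x p` for all `p`. -/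
theorem same_face_iff_twist_algClosed
    (k : Type*) [Field k] [IsAlgClosed k]
    (P : Type*) [AddCommMonoid P] [IsCancelAdd P]
    (x y : Multiplicative P →* k) :
    {p : P | x (Multiplicative.ofAdd p) ≠ 0} = {p : P | y (Multiplicative.ofAdd p) ≠ 0} ↔
      ∃ g : Multiplicative P →* kˣ, ∀ p : P,
        y (Multiplicative.ofAdd p) =
          (g (Multiplicative.ofAdd p) : k) * x (Multiplicative.ofAdd p) := by
  constructor
  · intro hface
    have hxy : ∀ m : Multiplicative P, x m ≠ 0 → y m ≠ 0 := fun m hm =>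
      (Set.ext_iff.mp hface (Multiplicative.toAdd m)).mp hm
    set S : Submonoid (Multiplicative P) :=
      { carrier := {m | x m ≠ 0}
        one_mem' := by simp
        mul_mem' := fun {a b} ha hb => by
          simp only [Set.mem_setOf_eq, map_mul] at *
          exact mul_ne_zero ha hb } with hS_def
    have hmemS : ∀ m : Multiplicative P, x m ≠ 0 → m ∈ S := fun m hm => hm
    set h : S →* kˣ :=
      { toFun := fun s => Units.mk0 (y (s : Multiplicative P)) (hxy _ s.2) *
          (Units.mk0 (x (s : Multiplicative P)) s.2)⁻¹
        map_one' := by ext; simp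
        map_mul' := fun a b => by
          ext
          push_cast
          simp only [Submonoid.coe_mul, map_mul]
          field_simp
          simp only [Units.val_mk0] } with hh_def
    obtain ⟨g, hg⟩ := groth_ext S k h
    refine ⟨g, fun p => ?_⟩
    by_cases hx : x (Multiplicative.ofAdd p) = 0
    · have hy : y (Multiplicative.ofAdd p) = 0 := by
        by_contra hy
        exact ((Set.ext_iff.mp hface p).mpr hy) hx
      rw [hx, hy, mul_zero]
    · have hks := hg ⟨Multiplicative.ofAdd p, hx⟩
      have hval : (g (Multiplicative.ofAdd p) : k) =
          y (Multiplicative.ofAdd p) * (x (Multiplicative.ofAdd p))⁻¹ := by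
        rw [hks, hh_def]
        simp
      rw [hval]
      field_simp
  · rintro ⟨g, hg⟩
    ext p
    simp only [Set.mem_setOf_eq, hg p]
    constructor
    · intro hx
      exact mul_ne_zero (g (Multiplicative.ofAdd p)).ne_zero hx
    · intro hgx hx
      rw [hx, mul_zero] at hgx
      exact hgx rfl
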